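/- Let Ω ⊂ ℝ^N (N ≥ 2) be a bounded open domain with C² boundary, α ∈ (1/2, 1), and let G : Ω × Ω → [0, ∞] be a measurable kernel satisfying G(x,y) ≤ c₂₈ min{ |x-y|^{-(N-2α)}, ρ(x)^{2α-1} ρ(y)^{2α-1} |x-y|^{-(N-2+2α)} } for all x ≠ y in Ω, for some c₂₈ > 0. Then for every bounded measurable g : Ω → ℝ and every x ∈ Ω, |∫_Ω G(x,y) g(y) dy| ≤ c₂₉ ‖g‖_{L^∞(Ω)} ρ(x)^{2α-1}, where c₂₉ > 0 depends only on Ω, α, and c₂₈; in particular sup_{x∈Ω} ∫_Ω ρ(y)^{2α-1}/|x-y|^{N-2+2α} dy < ∞. -/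

import Mathlib

open MeasureTheory Metric Set Filter Topology
open scoped ENNReal NNReal

noncomputable section

variable {N : ℕ}

/-- The distance from `x` to the complement of `Ω`, denoted `ρ(x)` in the paper. -/
def bdist (Ω : Set (EuclideanSpace ℝ (Fin N))) (x : EuclideanSpace ℝ (Fin N)) : ℝ :=
  Metric.infDist x Ωᶜ

/-- A set `Ω ⊆ ℝ^N` has `C²` boundary: near each boundary point, `Ω` is the sublevel set of a
`C²` function with nonvanishing differential. -/
def HasC2Boundary (Ω : Set (EuclideanSpace ℝ (Fin N))) : Prop :=
  ∀ x ∈ frontier Ω, ∃ (U : Set (EuclideanSpace ℝ (Fin N))) (ψ : EuclideanSpace ℝ (Fin N) → ℝ),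
    IsOpen U ∧ x ∈ U ∧ ContDiff ℝ 2 ψ ∧ (∀ y ∈ U, fderiv ℝ ψ y ≠ 0) ∧
    Ω ∩ U = {y ∈ U | ψ y < 0}

/-- `L` is the principal value of the regional fractional Laplacian `(-Δ)^α_Ω u (x)`. -/
def IsRegionalFracLap (Ω : Set (EuclideanSpace ℝ (Fin N))) (α : ℝ)
    (u : EuclideanSpace ℝ (Fin N) → ℝ) (x : EuclideanSpace ℝ (Fin N)) (L : ℝ) : Prop :=
  Tendsto (fun ε : ℝ => ∫ y in Ω \ Metric.ball x ε, (u x - u y) / ‖x - y‖ ^ ((N : ℝ) + 2 * α))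
    (𝓝[>] (0 : ℝ)) (𝓝 L)

/-- `L` is the principal value of the (full) fractional Laplacian `(-Δ)^α u (x)`. -/
def IsFracLap (α : ℝ) (u : EuclideanSpace ℝ (Fin N) → ℝ)
    (x : EuclideanSpace ℝ (Fin N)) (L : ℝ) : Prop :=
  Tendsto (fun ε : ℝ => ∫ y in (Metric.ball x ε)ᶜ, (u x - u y) / ‖x - y‖ ^ ((N : ℝ) + 2 * α))
    (𝓝[>] (0 : ℝ)) (𝓝 L)

open Classical in
/-- The test-function modification `ũ`, equal to `φ` on `V` and to `u` elsewhere. -/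
def patch (V : Set (EuclideanSpace ℝ (Fin N))) (φ u : EuclideanSpace ℝ (Fin N) → ℝ) :
    EuclideanSpace ℝ (Fin N) → ℝ :=
  fun y => if y ∈ V then φ y else u y

/-- `u` satisfies `(-Δ)^α_Ω u + f(u) ≥ g` in `Ω` in the viscosity sense. -/
def ViscSuper (Ω : Set (EuclideanSpace ℝ (Fin N))) (α : ℝ) (f : ℝ → ℝ)
    (g u : EuclideanSpace ℝ (Fin N) → ℝ) : Prop :=
  ∀ x₀ ∈ Ω, ∀ V : Set (EuclideanSpace ℝ (Fin N)), IsOpen V → x₀ ∈ V → closure V ⊆ Ω →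
    ∀ φ : EuclideanSpace ℝ (Fin N) → ℝ, ContDiffOn ℝ 2 φ (closure V) → φ x₀ = u x₀ →
      (∀ y ∈ V, u x₀ - φ x₀ ≤ u y - φ y) →
      ∃ L : ℝ, IsRegionalFracLap Ω α (patch V φ u) x₀ L ∧ g x₀ ≤ L + f (u x₀)

/-- `u` satisfies `(-Δ)^α_Ω u + f(u) ≤ g` in `Ω` in the viscosity sense. -/
def ViscSub (Ω : Set (EuclideanSpace ℝ (Fin N))) (α : ℝ) (f : ℝ → ℝ)
    (g u : EuclideanSpace ℝ (Fin N) → ℝ) : Prop :=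
  ∀ x₀ ∈ Ω, ∀ V : Set (EuclideanSpace ℝ (Fin N)), IsOpen V → x₀ ∈ V → closure V ⊆ Ω →
    ∀ φ : EuclideanSpace ℝ (Fin N) → ℝ, ContDiffOn ℝ 2 φ (closure V) → φ x₀ = u x₀ →
      (∀ y ∈ V, u y - φ y ≤ u x₀ - φ x₀) →
      ∃ L : ℝ, IsRegionalFracLap Ω α (patch V φ u) x₀ L ∧ L + f (u x₀) ≤ g x₀

/-- `u` satisfies `(-Δ)^α u + f(u) ≥ g` in `Ω` in the viscosity sense (full fractional
Laplacian). -/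
def ViscSuperFrac (Ω : Set (EuclideanSpace ℝ (Fin N))) (α : ℝ) (f : ℝ → ℝ)
    (g u : EuclideanSpace ℝ (Fin N) → ℝ) : Prop :=
  ∀ x₀ ∈ Ω, ∀ V : Set (EuclideanSpace ℝ (Fin N)), IsOpen V → x₀ ∈ V → closure V ⊆ Ω →
    ∀ φ : EuclideanSpace ℝ (Fin N) → ℝ, ContDiffOn ℝ 2 φ (closure V) → φ x₀ = u x₀ →
      (∀ y ∈ V, u x₀ - φ x₀ ≤ u y - φ y) →
      ∃ L : ℝ, IsFracLap α (patch V φ u) x₀ L ∧ g x₀ ≤ L + f (u x₀)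

/-- `u` satisfies `(-Δ)^α u + f(u) ≤ g` in `Ω` in the viscosity sense (full fractional
Laplacian). -/
def ViscSubFrac (Ω : Set (EuclideanSpace ℝ (Fin N))) (α : ℝ) (f : ℝ → ℝ)
    (g u : EuclideanSpace ℝ (Fin N) → ℝ) : Prop :=
  ∀ x₀ ∈ Ω, ∀ V : Set (EuclideanSpace ℝ (Fin N)), IsOpen V → x₀ ∈ V → closure V ⊆ Ω →
    ∀ φ : EuclideanSpace ℝ (Fin N) → ℝ, ContDiffOn ℝ 2 φ (closure V) → φ x₀ = u x₀ →
      (∀ y ∈ V, u y - φ y ≤ u x₀ - φ x₀) →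
      ∃ L : ℝ, IsFracLap α (patch V φ u) x₀ L ∧ L + f (u x₀) ≤ g x₀

/-- `u(x) → +∞` as `x → ∂Ω` from inside `Ω`. -/
def BlowsUp (Ω : Set (EuclideanSpace ℝ (Fin N))) (u : EuclideanSpace ℝ (Fin N) → ℝ) : Prop :=
  ∀ z ∈ frontier Ω, Tendsto u (𝓝[Ω] z) atTop

/-- A boundary blow-up viscosity solution of `(-Δ)^α_Ω u + f(u) = 0` in `Ω`,
`u = +∞` on `∂Ω`. -/
def IsBBSolution (Ω : Set (EuclideanSpace ℝ (Fin N))) (α : ℝ) (f : ℝ → ℝ)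
    (u : EuclideanSpace ℝ (Fin N) → ℝ) : Prop :=
  ContinuousOn u Ω ∧ IntegrableOn u Ω volume ∧
  ViscSuper Ω α f (fun _ => 0) u ∧ ViscSub Ω α f (fun _ => 0) u ∧ BlowsUp Ω u

/-- A viscosity solution of `(-Δ)^α_Ω u + f(u) = g` in `Ω`, `u = c` on `∂Ω` (the constant
boundary value being attained continuously). -/
def IsDirichletSol (Ω : Set (EuclideanSpace ℝ (Fin N))) (α : ℝ) (f : ℝ → ℝ)
    (g : EuclideanSpace ℝ (Fin N) → ℝ) (c : ℝ) (u : EuclideanSpace ℝ (Fin N) → ℝ) : Prop :=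
  ContinuousOn u Ω ∧ IntegrableOn u Ω volume ∧
  ViscSuper Ω α f g u ∧ ViscSub Ω α f g u ∧
  ∀ z ∈ frontier Ω, Tendsto u (𝓝[Ω] z) (𝓝 c)

/-- The `C^t = C^{t₀, t - t₀}` Hölder norm of `w` on `s` is at most `M` (for `t` a positive
noninteger with integer part `t₀ = ⌊t⌋`). -/
def CNormLE (t : ℝ) (w : EuclideanSpace ℝ (Fin N) → ℝ)
    (s : Set (EuclideanSpace ℝ (Fin N))) (M : ℝ) : Prop :=
  ContDiffOn ℝ (⌊t⌋₊ : ℕ) w s ∧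
  (∀ k : ℕ, k ≤ ⌊t⌋₊ → ∀ x ∈ s, ‖iteratedFDerivWithin ℝ k w s x‖ ≤ M) ∧
  ∀ x ∈ s, ∀ y ∈ s,
    ‖iteratedFDerivWithin ℝ ⌊t⌋₊ w s x - iteratedFDerivWithin ℝ ⌊t⌋₊ w s y‖ ≤
      M * ‖x - y‖ ^ (t - (⌊t⌋₊ : ℝ))

/-- `w` is locally `C^t` in the open set `Ω`. -/
def LocallyCNorm (t : ℝ) (w : EuclideanSpace ℝ (Fin N) → ℝ)
    (Ω : Set (EuclideanSpace ℝ (Fin N))) : Prop :=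
  ∀ x ∈ Ω, ∃ r > 0, Metric.ball x r ⊆ Ω ∧ ∃ M : ℝ, CNormLE t w (Metric.ball x r) M

/-- `t` is not an integer. -/
def NotNatural (t : ℝ) : Prop := ¬ ∃ n : ℕ, t = n
private lemma master {N : ℕ} (hN : 0 < N) {R s : ℝ} (hR : 0 < R) (hs0 : 0 < s)
    (hsN : s < N) :
    ∃ T : ℝ≥0∞, T ≠ ⊤ ∧ ∀ x : EuclideanSpace ℝ (Fin N),
      ∫⁻ y in Metric.ball x R, ENNReal.ofReal (‖x - y‖ ^ (-s)) ≤ T := by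
  haveI : Nonempty (Fin N) := ⟨⟨0, hN⟩⟩
  set E := EuclideanSpace ℝ (Fin N)
  haveI : Nontrivial E := by
    refine ⟨0, EuclideanSpace.single ⟨0, hN⟩ (1:ℝ), ?_⟩
    intro h
    have := congrArg norm h
    rw [EuclideanSpace.norm_single, norm_zero] at this
    norm_num at this
  set V : ℝ≥0∞ := volume (Metric.ball (0:E) 1) with hV
  have hVne : V ≠ ⊤ := (measure_ball_lt_top).ne
  set q : ℝ := (2:ℝ) ^ (s - (N:ℝ)) with hq
  have hq0 : 0 < q := Real.rpow_pos_of_pos two_pos _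
  have hq1 : q < 1 := Real.rpow_lt_one_of_one_lt_of_neg one_lt_two (by linarith)
  have hkey : ∀ n : ℕ, (R / 2 ^ (n+1)) ^ (-s) * (R / 2 ^ n) ^ (N:ℕ) =
      R ^ ((N:ℝ) - s) * 2 ^ s * q ^ n := by
    intro n
    have h2 : (0:ℝ) ≤ 2 := by norm_num
    have e1 : ∀ (k : ℕ) (t : ℝ), (R / 2 ^ k) ^ t = R ^ t / 2 ^ ((k:ℝ) * t) := by
      intro k t
      rw [Real.div_rpow hR.le (by positivity), ← Real.rpow_natCast (2:ℝ) k,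
        ← Real.rpow_mul h2]
    rw [← Real.rpow_natCast (R / 2 ^ n) N, e1, e1, hq,
      ← Real.rpow_natCast ((2:ℝ) ^ (s - (N:ℝ))) n, ← Real.rpow_mul h2,
      div_mul_div_comm, ← Real.rpow_add hR, mul_assoc, ← Real.rpow_add two_pos,
      div_eq_mul_inv, ← Real.rpow_neg h2]
    push_cast
    ring_nf
    rw [mul_assoc, ← Real.rpow_add two_pos]; ring_nf
  refine ⟨ENNReal.ofReal (R ^ ((N:ℝ) - s) * 2 ^ s) * V *
    (1 - ENNReal.ofReal q)⁻¹, ?_, ?_⟩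
  · refine ENNReal.mul_ne_top (ENNReal.mul_ne_top ENNReal.ofReal_ne_top hVne) ?_
    simp [ENNReal.inv_ne_top, tsub_eq_zero_iff_le, not_le, ENNReal.ofReal_lt_one.2 hq1]
    exact hq1
  · intro x
    set A : ℕ → Set E := fun n => ball x (R / 2 ^ n) \ ball x (R / 2 ^ (n+1)) with hA
    have hcover : ball x R ⊆ {x} ∪ ⋃ n, A n := by
      intro y hy
      rcases eq_or_ne y x with rfl | hyx
      · exact Or.inl rfl
      · right
        have hd0 : 0 < dist y x := dist_pos.2 hyx
        have hdR : dist y x < R := mem_ball.1 hy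
        have hex : ∃ n : ℕ, R / 2 ^ (n+1) ≤ dist y x := by
          obtain ⟨n, hn⟩ := pow_unbounded_of_one_lt (R / dist y x) one_lt_two
          refine ⟨n, ?_⟩
          rw [div_le_iff₀ (by positivity)]
          rw [div_lt_iff₀ hd0] at hn
          have h2n : (2:ℝ) ^ n ≤ 2 ^ (n+1) := by
            apply pow_le_pow_right₀ (by norm_num); omega
          nlinarith
        refine mem_iUnion.2 ⟨Nat.find hex, ?_, ?_⟩
        · rcases Nat.eq_zero_or_pos (Nat.find hex) with h0 | hpos
          · rw [mem_ball, h0]; simpa using hdR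
          · have hmin := Nat.find_min hex (Nat.sub_lt hpos one_pos)
            have heq : Nat.find hex - 1 + 1 = Nat.find hex := by omega
            rw [heq] at hmin
            exact mem_ball.2 (lt_of_not_ge hmin)
        · simpa [mem_ball, not_lt] using Nat.find_spec hex
    have hterm : ∀ n : ℕ, ∫⁻ y in A n, ENNReal.ofReal (‖x - y‖ ^ (-s)) ≤
        ENNReal.ofReal (R ^ ((N:ℝ) - s) * 2 ^ s) * ENNReal.ofReal q ^ n * V := by
      intro n
      have hAmeas : MeasurableSet (A n) := measurableSet_ball.diff measurableSet_ball
      have hb : ∀ y ∈ A n, ENNReal.ofReal (‖x - y‖ ^ (-s)) ≤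
          ENNReal.ofReal ((R / 2 ^ (n+1)) ^ (-s)) := by
        intro y hy
        apply ENNReal.ofReal_le_ofReal
        have h1 : R / 2 ^ (n+1) ≤ ‖x - y‖ := by
          have h2 := hy.2
          rw [mem_ball, not_lt] at h2
          rwa [show ‖x - y‖ = dist y x by rw [dist_comm, dist_eq_norm]]
        exact Real.rpow_le_rpow_of_nonpos (by positivity) h1 (by linarith)
      calc ∫⁻ y in A n, ENNReal.ofReal (‖x - y‖ ^ (-s))
          ≤ ∫⁻ _ in A n, ENNReal.ofReal ((R / 2 ^ (n+1)) ^ (-s)) :=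
            setLIntegral_mono' hAmeas hb
        _ = ENNReal.ofReal ((R / 2 ^ (n+1)) ^ (-s)) * volume (A n) :=
            setLIntegral_const _ _
        _ ≤ ENNReal.ofReal ((R / 2 ^ (n+1)) ^ (-s)) * volume (ball x (R / 2 ^ n)) := by
            gcongr
            exact diff_subset
        _ = ENNReal.ofReal ((R / 2 ^ (n+1)) ^ (-s)) *
            (ENNReal.ofReal ((R / 2 ^ n) ^ Module.finrank ℝ E) * V) := by
            rw [Measure.addHaar_ball volume x (by positivity)]
        _ = ENNReal.ofReal (R ^ ((N:ℝ) - s) * 2 ^ s) * ENNReal.ofReal q ^ n * V := by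
            rw [← mul_assoc, ← ENNReal.ofReal_mul (by positivity)]
            rw [show Module.finrank ℝ E = N from finrank_euclideanSpace_fin]
            rw [hkey n, ENNReal.ofReal_mul (by positivity), ENNReal.ofReal_pow hq0.le]
    calc ∫⁻ y in ball x R, ENNReal.ofReal (‖x - y‖ ^ (-s))
        ≤ ∫⁻ y in {x} ∪ ⋃ n, A n, ENNReal.ofReal (‖x - y‖ ^ (-s)) :=
          lintegral_mono_set hcover
      _ ≤ (∫⁻ y in {x}, ENNReal.ofReal (‖x - y‖ ^ (-s))) +
          ∫⁻ y in ⋃ n, A n, ENNReal.ofReal (‖x - y‖ ^ (-s)) :=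
          lintegral_union_le _ _ _
      _ ≤ 0 + ∑' n, ∫⁻ y in A n, ENNReal.ofReal (‖x - y‖ ^ (-s)) := by
          gcongr
          · rw [setLIntegral_measure_zero _ _ (measure_singleton x)]
          · exact lintegral_iUnion_le _ _
      _ ≤ 0 + ∑' n, ENNReal.ofReal (R ^ ((N:ℝ) - s) * 2 ^ s) * ENNReal.ofReal q ^ n * V := by
          gcongr with n
          exact hterm n
      _ = ENNReal.ofReal (R ^ ((N:ℝ) - s) * 2 ^ s) * V * (1 - ENNReal.ofReal q)⁻¹ := by
          rw [zero_add]
          have hrw : ∀ n : ℕ, ENNReal.ofReal (R ^ ((N:ℝ) - s) * 2 ^ s) *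
              ENNReal.ofReal q ^ n * V =
              (ENNReal.ofReal (R ^ ((N:ℝ) - s) * 2 ^ s) * V) * ENNReal.ofReal q ^ n :=
            fun n => by ring
          simp_rw [hrw, ENNReal.tsum_mul_left, ENNReal.tsum_geometric]

/-- Green-kernel estimate: if a nonnegative measurable kernel `G` on `Ω × Ω`
satisfies `G(x,y) ≤ c₂₈ min{|x-y|^{-(N-2α)}, ρ(x)^{2α-1} ρ(y)^{2α-1} |x-y|^{-(N-2+2α)}}`, then
`|∫_Ω G(x,y) g(y) dy| ≤ c₂₉ ‖g‖_{L^∞(Ω)} ρ(x)^{2α-1}` for every bounded measurable `g`; in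
particular `sup_{x ∈ Ω} ∫_Ω ρ(y)^{2α-1} |x-y|^{-(N-2+2α)} dy < ∞`. -/
theorem statement18
    (N : ℕ) (hN : 2 ≤ N) (Ω : Set (EuclideanSpace ℝ (Fin N)))
    (hΩo : IsOpen Ω) (hΩb : Bornology.IsBounded Ω) (hΩconn : IsConnected Ω)
    (hΩbd : HasC2Boundary Ω)
    (α : ℝ) (hα1 : 1 / 2 < α) (hα2 : α < 1)
    (c₂₈ : ℝ) (hc₂₈ : 0 < c₂₈)
    (G : EuclideanSpace ℝ (Fin N) → EuclideanSpace ℝ (Fin N) → ℝ)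
    (hGm : Measurable (Function.uncurry G)) (hGnn : ∀ x y, 0 ≤ G x y)
    (hGbd : ∀ x ∈ Ω, ∀ y ∈ Ω, x ≠ y →
      G x y ≤ c₂₈ * min (‖x - y‖ ^ (-((N : ℝ) - 2 * α)))
        (bdist Ω x ^ (2 * α - 1) * bdist Ω y ^ (2 * α - 1) *
          ‖x - y‖ ^ (-((N : ℝ) - 2 + 2 * α)))) :
    (∃ c₂₉ : ℝ, 0 < c₂₉ ∧
      ∀ g : EuclideanSpace ℝ (Fin N) → ℝ, Measurable g →
        ∀ K : ℝ, (∀ y ∈ Ω, |g y| ≤ K) →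
          ∀ x ∈ Ω,
            IntegrableOn (fun y => G x y * g y) Ω volume ∧
            |∫ y in Ω, G x y * g y| ≤ c₂₉ * K * bdist Ω x ^ (2 * α - 1)) ∧
    ∃ C : ℝ, ∀ x ∈ Ω,
      IntegrableOn
        (fun y => bdist Ω y ^ (2 * α - 1) * ‖x - y‖ ^ (-((N : ℝ) - 2 + 2 * α))) Ω volume ∧
      (∫ y in Ω, bdist Ω y ^ (2 * α - 1) * ‖x - y‖ ^ (-((N : ℝ) - 2 + 2 * α))) ≤ C := by
  classical
  haveI : Nonempty (Fin N) := ⟨⟨0, by omega⟩⟩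
  set β : ℝ := 2 * α - 1 with hβ
  have hβ0 : 0 ≤ β := by simp only [hβ]; linarith
  set s : ℝ := (N : ℝ) - 2 + 2 * α with hsdef
  have hN2 : (2:ℝ) ≤ (N:ℝ) := by exact_mod_cast hN
  have hs0 : 0 < s := by simp only [hsdef]; linarith
  have hsN : s < (N:ℝ) := by simp only [hsdef]; linarith
  have hexp : -((N : ℝ) - 2 + 2 * α) = -s := by rw [hsdef]
  obtain ⟨x₀, hx₀⟩ := hΩconn.nonempty
  set R : ℝ := Metric.diam Ω + 1 with hRdef
  have hdiam : 0 ≤ Metric.diam Ω := Metric.diam_nonneg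
  have hR0 : 0 < R := by simp only [hRdef]; linarith
  have hsub : ∀ x ∈ Ω, Ω ⊆ ball x R := fun x hx y hy =>
    mem_ball.2 (lt_of_le_of_lt (Metric.dist_le_diam_of_mem hΩb hy hx)
      (by simp only [hRdef]; linarith))
  set B : ℝ := 2 * R with hBdef
  have hB0 : 0 ≤ B := by simp only [hBdef]; linarith
  have hBd : ∀ y ∈ Ω, bdist Ω y ≤ B := by
    intro y hy
    set z : EuclideanSpace ℝ (Fin N) := x₀ + EuclideanSpace.single ⟨0, by omega⟩ R with hz
    have hzn : ‖z - x₀‖ = R := by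
      rw [hz, add_sub_cancel_left, EuclideanSpace.norm_single, Real.norm_eq_abs,
        abs_of_pos hR0]
    have hzΩ : z ∈ Ωᶜ := by
      intro hzin
      have := hsub x₀ hx₀ hzin
      rw [mem_ball, dist_eq_norm, hzn] at this
      exact lt_irrefl _ this
    calc bdist Ω y ≤ dist y z := Metric.infDist_le_dist_of_mem hzΩ
      _ ≤ dist y x₀ + dist x₀ z := dist_triangle y x₀ z
      _ ≤ Metric.diam Ω + R := by
          refine add_le_add (Metric.dist_le_diam_of_mem hΩb hy hx₀) ?_
          rw [dist_comm, dist_eq_norm, hzn]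
      _ ≤ B := by simp only [hBdef, hRdef]; linarith
  obtain ⟨T, hTne, hT⟩ := master (by omega : 0 < N) hR0 hs0 hsN
  have hΩmeas : MeasurableSet Ω := hΩo.measurableSet
  have hbm : Measurable fun y : EuclideanSpace ℝ (Fin N) => bdist Ω y ^ β :=
    Measurable.comp (f := fun y => bdist Ω y) (g := fun t : ℝ => t ^ β)
      (by fun_prop) (continuous_infDist_pt _).measurable
  have hnm : ∀ x : EuclideanSpace ℝ (Fin N),
      Measurable fun y : EuclideanSpace ℝ (Fin N) => ‖x - y‖ ^ (-s) := by
    intro x; fun_prop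
  -- key lintegral bound
  have hkeyL : ∀ x ∈ Ω, ∫⁻ y in Ω,
      ENNReal.ofReal (bdist Ω y ^ β * ‖x - y‖ ^ (-s)) ≤ ENNReal.ofReal (B ^ β) * T := by
    intro x hx
    have step1 : ∫⁻ y in Ω, ENNReal.ofReal (bdist Ω y ^ β * ‖x - y‖ ^ (-s)) ≤
        ∫⁻ y in Ω, ENNReal.ofReal (B ^ β) * ENNReal.ofReal (‖x - y‖ ^ (-s)) := by
      refine setLIntegral_mono' hΩmeas ?_
      intro y hy
      rw [← ENNReal.ofReal_mul (Real.rpow_nonneg hB0 β)]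
      apply ENNReal.ofReal_le_ofReal
      have h1 : bdist Ω y ^ β ≤ B ^ β :=
        Real.rpow_le_rpow Metric.infDist_nonneg (hBd y hy) hβ0
      have h2 : (0:ℝ) ≤ ‖x - y‖ ^ (-s) := Real.rpow_nonneg (norm_nonneg _) _
      exact mul_le_mul_of_nonneg_right h1 h2
    refine le_trans step1 ?_
    rw [lintegral_const_mul' _ _ ENNReal.ofReal_ne_top]
    exact mul_le_mul_right (le_trans (lintegral_mono_set (hsub x hx)) (hT x)) _
  have hBT_ne : ENNReal.ofReal (B ^ β) * T ≠ ⊤ :=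
    ENNReal.mul_ne_top ENNReal.ofReal_ne_top hTne
  -- Part 2 integrability
  have hInt2 : ∀ x ∈ Ω, IntegrableOn
      (fun y => bdist Ω y ^ β * ‖x - y‖ ^ (-s)) Ω volume := by
    intro x hx
    refine ⟨(hbm.mul (hnm x)).aestronglyMeasurable, ?_⟩
    rw [hasFiniteIntegral_iff_ofReal ?_]
    · exact lt_of_le_of_lt (hkeyL x hx) (lt_top_iff_ne_top.2 hBT_ne)
    · filter_upwards with y
      have := Metric.infDist_nonneg (s := Ωᶜ) (x := y)
      positivity
  set C : ℝ := (ENNReal.ofReal (B ^ β) * T).toReal with hCdef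
  have hC0 : 0 ≤ C := ENNReal.toReal_nonneg
  have hval2 : ∀ x ∈ Ω,
      (∫ y in Ω, bdist Ω y ^ β * ‖x - y‖ ^ (-s)) ≤ C := by
    intro x hx
    rw [integral_eq_lintegral_of_nonneg_ae (f := fun y => bdist Ω y ^ β * ‖x - y‖ ^ (-s)) ?_ (hbm.mul (hnm x)).aestronglyMeasurable]
    · exact ENNReal.toReal_mono hBT_ne (hkeyL x hx)
    · filter_upwards with y
      have := Metric.infDist_nonneg (s := Ωᶜ) (x := y)
      positivity
  constructor
  · -- part 1
    refine ⟨c₂₈ * B ^ β * T.toReal + 1, ?_, ?_⟩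
    · have h1 : 0 ≤ B ^ β := Real.rpow_nonneg hB0 β
      have h2 : 0 ≤ T.toReal := ENNReal.toReal_nonneg
      have := mul_nonneg (mul_nonneg hc₂₈.le h1) h2
      linarith
    intro g hg K hK x hx
    have hK0 : 0 ≤ K := le_trans (abs_nonneg _) (hK x₀ hx₀)
    have hρx : 0 ≤ bdist Ω x := Metric.infDist_nonneg
    have hρxβ : 0 ≤ bdist Ω x ^ β := Real.rpow_nonneg hρx β
    have hBβ : 0 ≤ B ^ β := Real.rpow_nonneg hB0 β
    set M : ℝ := c₂₈ * K * (bdist Ω x ^ β) * B ^ β with hMdef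
    have hM0 : 0 ≤ M := by positivity
    have hfmeas : Measurable fun y => G x y * g y :=
      (hGm.comp measurable_prodMk_left).mul hg
    -- a.e. pointwise bound
    have hne : ∀ᵐ y : EuclideanSpace ℝ (Fin N) ∂volume, y ≠ x := by
      haveI : Nontrivial (EuclideanSpace ℝ (Fin N)) := by
        refine ⟨0, EuclideanSpace.single ⟨0, by omega⟩ (1:ℝ), ?_⟩
        intro h
        have := congrArg norm h
        rw [EuclideanSpace.norm_single, norm_zero] at this
        norm_num at this
      rw [ae_iff]
      have : {y : EuclideanSpace ℝ (Fin N) | ¬ y ≠ x} = {x} := by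
        ext y; simp
      rw [this, measure_singleton]
    have hae : ∀ᵐ y ∂(volume.restrict Ω),
        ‖G x y * g y‖ ≤ M * ‖x - y‖ ^ (-s) := by
      filter_upwards [ae_restrict_mem hΩmeas, ae_restrict_of_ae hne] with y hyΩ hyx
      have hd : (0:ℝ) ≤ ‖x - y‖ ^ (-s) := Real.rpow_nonneg (norm_nonneg _) _
      have hρy : bdist Ω y ^ β ≤ B ^ β :=
        Real.rpow_le_rpow Metric.infDist_nonneg (hBd y hyΩ) hβ0
      have hρy0 : 0 ≤ bdist Ω y ^ β := Real.rpow_nonneg Metric.infDist_nonneg β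
      have hG := hGbd x hx y hyΩ (Ne.symm hyx)
      rw [hexp] at hG
      have hGle : G x y ≤ c₂₈ * (bdist Ω x ^ β * bdist Ω y ^ β * ‖x - y‖ ^ (-s)) :=
        le_trans hG (mul_le_mul_of_nonneg_left (min_le_right _ _) hc₂₈.le)
      rw [norm_mul, Real.norm_eq_abs, Real.norm_eq_abs, abs_of_nonneg (hGnn x y)]
      calc G x y * |g y|
          ≤ (c₂₈ * (bdist Ω x ^ β * bdist Ω y ^ β * ‖x - y‖ ^ (-s))) * K :=
            mul_le_mul hGle (hK y hyΩ) (abs_nonneg _) (by positivity)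
        _ = (c₂₈ * K * bdist Ω x ^ β * ‖x - y‖ ^ (-s)) * (bdist Ω y ^ β) := by ring
        _ ≤ (c₂₈ * K * bdist Ω x ^ β * ‖x - y‖ ^ (-s)) * B ^ β :=
            mul_le_mul_of_nonneg_left hρy (by positivity)
        _ = M * ‖x - y‖ ^ (-s) := by rw [hMdef]; ring
    -- bound integrable
    have hL : ∫⁻ y in Ω, ENNReal.ofReal (M * ‖x - y‖ ^ (-s)) ≤ ENNReal.ofReal M * T := by
      simp_rw [ENNReal.ofReal_mul hM0]
      rw [lintegral_const_mul' _ _ ENNReal.ofReal_ne_top]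
      exact mul_le_mul_right (le_trans (lintegral_mono_set (hsub x hx)) (hT x)) _
    have hMT_ne : ENNReal.ofReal M * T ≠ ⊤ := ENNReal.mul_ne_top ENNReal.ofReal_ne_top hTne
    have hIbound : IntegrableOn (fun y => M * ‖x - y‖ ^ (-s)) Ω volume := by
      refine ⟨(measurable_const.mul (hnm x)).aestronglyMeasurable, ?_⟩
      rw [hasFiniteIntegral_iff_ofReal ?_]
      · exact lt_of_le_of_lt hL (lt_top_iff_ne_top.2 hMT_ne)
      · filter_upwards with y
        have : (0:ℝ) ≤ ‖x - y‖ ^ (-s) := Real.rpow_nonneg (norm_nonneg _) _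
        positivity
    have hIf : IntegrableOn (fun y => G x y * g y) Ω volume :=
      hIbound.mono' hfmeas.aestronglyMeasurable hae
    refine ⟨hIf, ?_⟩
    have habs : |∫ y in Ω, G x y * g y| ≤ ∫ y in Ω, M * ‖x - y‖ ^ (-s) := by
      calc |∫ y in Ω, G x y * g y| = ‖∫ y in Ω, G x y * g y‖ :=
            (Real.norm_eq_abs _).symm
        _ ≤ ∫ y in Ω, ‖G x y * g y‖ := norm_integral_le_integral_norm _
        _ ≤ ∫ y in Ω, M * ‖x - y‖ ^ (-s) := integral_mono_ae hIf.norm hIbound hae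
    have hval : ∫ y in Ω, M * ‖x - y‖ ^ (-s) ≤ M * T.toReal := by
      rw [integral_eq_lintegral_of_nonneg_ae (f := fun y => M * ‖x - y‖ ^ (-s)) ?_
        (measurable_const.mul (hnm x)).aestronglyMeasurable]
      · calc (∫⁻ y in Ω, ENNReal.ofReal (M * ‖x - y‖ ^ (-s))).toReal
            ≤ (ENNReal.ofReal M * T).toReal := ENNReal.toReal_mono hMT_ne hL
          _ = M * T.toReal := by rw [ENNReal.toReal_mul, ENNReal.toReal_ofReal hM0]
      · filter_upwards with y
        have : (0:ℝ) ≤ ‖x - y‖ ^ (-s) := Real.rpow_nonneg (norm_nonneg _) _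
        positivity
    have hfinal : M * T.toReal ≤ (c₂₈ * B ^ β * T.toReal + 1) * K * bdist Ω x ^ β := by
      have h2 : 0 ≤ T.toReal := ENNReal.toReal_nonneg
      have h3 : 0 ≤ K * bdist Ω x ^ β := by positivity
      rw [hMdef]
      nlinarith
    linarith [le_trans habs hval]
  · -- part 2
    exact ⟨C, fun x hx => ⟨hInt2 x hx, hval2 x hx⟩⟩
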